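/- Let λ > 0, γ > 0 with λ·γ < 1, and let z ∈ ℝⁿ satisfy z_1 ≥ z_2 ≥ … ≥ z_n ≥ 0. For any index i with 0 ≤ i ≤ n−1: if z_{i+1} > h(i), then z_{i+1} > h(i+1) > h(i). -/

import Mathlib

open Finset

/-- The penalty `P_gamma(x) = gamma * (sum_{i<m} |x_i| |x_m|) + sum_i |x_i|` on R^n. -/
noncomputable def P (n : ℕ) (γ : ℝ) (x : Fin n → ℝ) : ℝ :=
  γ * (∑ i : Fin n, ∑ m ∈ Finset.Ioi i, |x i| * |x m|) + ∑ i : Fin n, |x i|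

/-- The candidate thresholds `h(i) = (lam(1-lam*gamma) + lam*gamma*(z_1+...+z_i)) / (1+(i-1)lam*gamma)`. -/
noncomputable def hfun (n : ℕ) (lam γ : ℝ) (z : Fin n → ℝ) (i : ℕ) : ℝ :=
  (lam * (1 - lam * γ) + lam * γ * ∑ m ∈ Finset.univ.filter (fun m : Fin n => (m : ℕ) < i), z m) /
    (1 + ((i : ℝ) - 1) * lam * γ)

lemma sum_filter_succ (n : ℕ) (z : Fin n → ℝ) (i : ℕ) (hi : i < n) :
    ∑ m ∈ Finset.univ.filter (fun m : Fin n => (m : ℕ) < i + 1), z m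
      = (∑ m ∈ Finset.univ.filter (fun m : Fin n => (m : ℕ) < i), z m) + z ⟨i, hi⟩ := by
  have hset : Finset.univ.filter (fun m : Fin n => (m : ℕ) < i + 1)
      = insert ⟨i, hi⟩ (Finset.univ.filter (fun m : Fin n => (m : ℕ) < i)) := by
    ext m
    simp [Nat.lt_succ_iff_lt_or_eq, Fin.ext_iff, or_comm]
    exact le_iff_lt_or_eq.trans or_comm
  rw [hset, Finset.sum_insert (by simp)]
  ring

/-- Prop. 4: if `z_{i+1} > h(i)` then `z_{i+1} > h(i+1) > h(i)` (1-based indices). -/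
theorem h_increasing (n : ℕ) (lam γ : ℝ) (hlam : 0 < lam) (hγ : 0 < γ)
    (hlγ : lam * γ < 1) (z : Fin n → ℝ)
    (hsort : ∀ i j : Fin n, i ≤ j → z j ≤ z i) (hnn : ∀ i, 0 ≤ z i)
    (i : ℕ) (hi : i < n)
    (h : z ⟨i, hi⟩ > hfun n lam γ z i) :
    z ⟨i, hi⟩ > hfun n lam γ z (i + 1) ∧ hfun n lam γ z (i + 1) > hfun n lam γ z i := by
  have ha : 0 < lam * γ := mul_pos hlam hγ
  have hD : 0 < 1 + ((i : ℝ) - 1) * lam * γ := by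
    rcases Nat.eq_zero_or_pos i with h0 | h0
    · subst h0; push_cast; nlinarith
    · have h1 : (1 : ℝ) ≤ (i : ℝ) := by exact_mod_cast h0
      nlinarith
  have hD' : 0 < 1 + (((i : ℕ) + 1 : ℝ) - 1) * lam * γ := by
    have : (0 : ℝ) ≤ (i : ℝ) := Nat.cast_nonneg i
    nlinarith
  set S := ∑ m ∈ Finset.univ.filter (fun m : Fin n => (m : ℕ) < i), z m with hS
  have hN : lam * (1 - lam * γ) + lam * γ * S
      < z ⟨i, hi⟩ * (1 + ((i : ℝ) - 1) * lam * γ) := by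
    have := (div_lt_iff₀ hD).mp h
    linarith
  have hsum := sum_filter_succ n z i hi
  constructor
  · show hfun n lam γ z (i + 1) < z ⟨i, hi⟩
    unfold hfun
    rw [hsum, ← hS]
    rw [div_lt_iff₀ (by push_cast at hD' ⊢; exact hD')]
    push_cast
    nlinarith
  · show hfun n lam γ z i < hfun n lam γ z (i + 1)
    unfold hfun
    rw [hsum, ← hS]
    rw [div_lt_div_iff₀ hD (by push_cast at hD' ⊢; exact hD')]
    push_cast
    nlinarith
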